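/- If k ≥ 3 and s ≥ α(q+1) − 1 for some integer α ≥ 0, then m^s(k,q) ≤ (s+1−α)(q+1) + k − 2 + α. In particular, if s ≥ q then m^s(k,q) ≤ s(q+1) + k − 1. -/

import Mathlib

/-- The number of points (with multiplicity) of the projective system `G`
lying on the hyperplane `ker φ`. -/
noncomputable def hypCount {F : Type*} [Field F] [DecidableEq F] {n k : ℕ}
    (G : Fin n → Fin k → F) (φ : (Fin k → F) →ₗ[F] F) : ℕ :=
  (Finset.univ.filter fun i => φ (G i) = 0).card

/-- `G` is (the projective system of) a non-degenerate linear `[n,k,d]_q` code: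
an `n`-multiset of nonzero points spanning `PG(k-1,q)`, every hyperplane containing
at most `n - d` points, and some hyperplane (a secant) containing exactly `n - d`. -/
def IsCodePS (F : Type*) [Field F] [DecidableEq F] (n k d : ℕ)
    (G : Fin n → Fin k → F) : Prop :=
  0 < d ∧ (∀ i, G i ≠ 0) ∧ Submodule.span F (Set.range G) = ⊤ ∧
  (∀ φ : (Fin k → F) →ₗ[F] F, φ ≠ 0 → hypCount G φ + d ≤ n) ∧
  (∃ φ : (Fin k → F) →ₗ[F] F, φ ≠ 0 ∧ hypCount G φ + d = n)

/-- `mPar F s k` is `m^s(k,q)`: the maximum length of a non-degenerate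
`[n,k,d]_q` code with Singleton defect `s = n - k + 1 - d`. -/
noncomputable def mPar (F : Type*) [Field F] [Fintype F] [DecidableEq F] (s k : ℕ) : ℕ :=
  sSup {n : ℕ | ∃ d : ℕ, ∃ G : Fin n → Fin k → F, IsCodePS F n k d G ∧ d + k + s = n + 1}

section aux
variable {F : Type*} [Field F] [Fintype F] [DecidableEq F]

lemma option_count (a b : F) :
    (∑ o : Option F, if (Option.elim o b (fun c => a + c * b)) = 0 then 1 else 0)
      = 1 + Fintype.card F * (if a = 0 ∧ b = 0 then 1 else 0) := by
  rw [Fintype.sum_option]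
  by_cases hb : b = 0
  · subst hb
    by_cases ha : a = 0
    · subst ha; simp [Finset.sum_const, Finset.card_univ, Nat.add_comm]
    · simp [ha]
  · have h1 : ∀ c : F, (a + c * b = 0) ↔ c = -a / b := by
      intro c
      rw [eq_div_iff hb]
      constructor <;> intro h <;> linear_combination h
    simp only [Option.elim, h1, Finset.sum_ite_eq' Finset.univ (-a/b) (fun _ => (1:ℕ))]
    simp [hb]

lemma pencil_sum {n k : ℕ} (G : Fin n → Fin k → F)
    (φ ψ : (Fin k → F) →ₗ[F] F) (A : Finset (Fin n)) :
    (∑ o : Option F,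
      (A.filter fun i => (Option.elim o ψ (fun c => φ + c • ψ)) (G i) = 0).card)
    = A.card + Fintype.card F *
        (A.filter fun i => φ (G i) = 0 ∧ ψ (G i) = 0).card := by
  simp only [Finset.card_filter]
  rw [Finset.sum_comm]
  have h : ∀ i ∈ A,
      (∑ o : Option F, if (Option.elim o ψ fun c => φ + c • ψ) (G i) = 0 then 1 else 0)
      = 1 + Fintype.card F * (if φ (G i) = 0 ∧ ψ (G i) = 0 then 1 else 0) := by
    intro i _
    have he : ∀ o : Option F, (Option.elim o ψ fun c => φ + c • ψ) (G i)
        = Option.elim o (ψ (G i)) (fun c => φ (G i) + c * ψ (G i)) := by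
      intro o; cases o <;> simp
    simp only [he]
    exact option_count _ _
  rw [Finset.sum_congr rfl h, Finset.sum_add_distrib, Finset.sum_const, smul_eq_mul,
    mul_one, ← Finset.mul_sum]

lemma main_bound {K s α n d : ℕ} (hα : α * (Fintype.card F + 1) ≤ s + 1)
    (G : Fin n → Fin (K + 3) → F) (hC : IsCodePS F n (K + 3) d G)
    (hs : d + (K + 3) + s = n + 1) :
    n + 2 ≤ (s + 1 - α) * (Fintype.card F + 1) + (K + 3) + α := by
  have hq1 : 1 ≤ Fintype.card F := Fintype.card_pos
  obtain ⟨hd, hnz, hspan, hbound, φ₀, hφ₀, hsec⟩ := hC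
  have hαs : α ≤ s + 1 := le_trans (Nat.le_mul_of_pos_right α (by omega)) hα
  obtain ⟨I₀, hI₀⟩ : ∃ I : Finset (Fin n),
      I = Finset.univ.filter fun i => φ₀ (G i) = 0 := ⟨_, rfl⟩
  have hsec' : I₀.card + d = n := by rw [hI₀]; exact hsec
  have hI₀card : I₀.card = K + s + 2 := by omega
  obtain ⟨J, hJI, hJcard⟩ := Finset.exists_subset_card_eq (s := I₀) (n := K) (by omega)
  obtain ⟨W, hWdef⟩ : ∃ W : Submodule F (Fin (K + 3) → F),
      W = Submodule.span F (↑(J.image G) : Set (Fin (K + 3) → F)) := ⟨_, rfl⟩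
  have hWrank : Module.finrank F W ≤ K := by
    rw [hWdef]
    exact le_trans (finrank_span_finset_le_card (J.image G))
      (le_trans Finset.card_image_le (le_of_eq hJcard))
  have hann : 3 ≤ Module.finrank F W.dualAnnihilator := by
    have h1 : Module.finrank F ((Fin (K + 3) → F) ⧸ W)
        = Module.finrank F W.dualAnnihilator :=
      LinearEquiv.finrank_eq (Subspace.quotEquivAnnihilator W)
    have h2 := Submodule.finrank_quotient_add_finrank W
    have h3 : Module.finrank F (Fin (K + 3) → F) = K + 3 := by
      simp [Module.finrank_pi]
    omega
  have hmemann : ∀ ρ : (Fin (K + 3) → F) →ₗ[F] F, (∀ j ∈ J, ρ (G j) = 0) →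
      ρ ∈ W.dualAnnihilator := by
    intro ρ hρ
    rw [Submodule.mem_dualAnnihilator]
    intro w hw
    have hker : W ≤ LinearMap.ker ρ := by
      rw [hWdef, Submodule.span_le]
      intro x hx
      simp only [Finset.coe_image, Set.mem_image, Finset.mem_coe] at hx
      obtain ⟨j, hj, rfl⟩ := hx
      exact LinearMap.mem_ker.mpr (hρ j hj)
    exact LinearMap.mem_ker.mp (hker hw)
  have hφ₀ann : φ₀ ∈ W.dualAnnihilator := by
    refine hmemann φ₀ fun j hj => ?_
    have hmem := hJI hj
    rw [hI₀, Finset.mem_filter] at hmem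
    exact hmem.2
  have hlt1 : Submodule.span F ({φ₀} : Set (Module.Dual F (Fin (K + 3) → F)))
      < W.dualAnnihilator := by
    refine lt_of_le_of_ne ((Submodule.span_le).mpr (by simpa using hφ₀ann)) fun he => ?_
    have h2 : Module.finrank F
        (Submodule.span F ({φ₀} : Set (Module.Dual F (Fin (K + 3) → F)))) = 1 :=
      finrank_span_singleton hφ₀
    rw [he] at h2
    omega
  obtain ⟨ψ, hψann, hψs⟩ := SetLike.exists_of_lt hlt1
  have hlt2 : Submodule.span F ({φ₀, ψ} : Set (Module.Dual F (Fin (K + 3) → F)))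
      < W.dualAnnihilator := by
    refine lt_of_le_of_ne ((Submodule.span_le).mpr ?_) fun he => ?_
    · intro x hx
      rcases hx with rfl | hx
      · exact hφ₀ann
      · rcases hx with rfl; exact hψann
    · have h2 : Module.finrank F
          (Submodule.span F ({φ₀, ψ} : Set (Module.Dual F (Fin (K + 3) → F)))) ≤ 2 := by
        have hle := finrank_span_finset_le_card (R := F)
          ({φ₀, ψ} : Finset (Module.Dual F (Fin (K + 3) → F)))
        have hc : ({φ₀, ψ} : Finset _).card ≤ 2 :=
          le_trans (Finset.card_insert_le _ _) (by simp)
        have h3 := le_trans hle hc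
        rw [Finset.coe_insert, Finset.coe_singleton] at h3
        exact h3
      rw [he] at h2
      omega
  obtain ⟨χ, hχann, hχs⟩ := SetLike.exists_of_lt hlt2
  have hind : ∀ a b c : F, a • φ₀ + b • ψ + c • χ = 0 → a = 0 ∧ b = 0 ∧ c = 0 := by
    intro a b c habc
    have hc : c = 0 := by
      by_contra hc
      apply hχs
      have h1 : c • χ = -(a • φ₀ + b • ψ) := eq_neg_of_add_eq_zero_right habc
      have h2 : χ = c⁻¹ • -(a • φ₀ + b • ψ) := by
        rw [← h1, inv_smul_smul₀ hc]
      rw [h2]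
      exact Submodule.smul_mem _ _
        (Submodule.neg_mem _ (Submodule.mem_span_pair.mpr ⟨a, b, rfl⟩))
    subst hc
    rw [zero_smul, add_zero] at habc
    have hb : b = 0 := by
      by_contra hb
      apply hψs
      have h1 : b • ψ = -(a • φ₀) := eq_neg_of_add_eq_zero_right habc
      have h2 : ψ = b⁻¹ • -(a • φ₀) := by rw [← h1, inv_smul_smul₀ hb]
      rw [h2]
      exact Submodule.smul_mem _ _
        (Submodule.neg_mem _ (Submodule.mem_span_singleton.mpr ⟨a, rfl⟩))
    subst hb
    rw [zero_smul, add_zero] at habc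
    rcases smul_eq_zero.mp habc with ha | h0
    · exact ⟨ha, rfl, rfl⟩
    · exact absurd h0 hφ₀
  -- pigeonhole over the first pencil
  have hsum1 := pencil_sum G ψ χ I₀
  have hJsub : J ⊆ I₀.filter fun i => ψ (G i) = 0 ∧ χ (G i) = 0 := by
    intro j hj
    have hGW : G j ∈ W := by
      rw [hWdef]
      exact Submodule.subset_span (by simp only [Finset.coe_image]; exact ⟨j, hj, rfl⟩)
    exact Finset.mem_filter.mpr ⟨hJI hj,
      (Submodule.mem_dualAnnihilator ψ).mp hψann (G j) hGW,
      (Submodule.mem_dualAnnihilator χ).mp hχann (G j) hGW⟩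
  have hm0 : K ≤ (I₀.filter fun i => ψ (G i) = 0 ∧ χ (G i) = 0).card := by
    have := Finset.card_le_card hJsub
    omega
  have hex : ∃ o : Option F,
      K + 1 + α ≤ (I₀.filter fun i => (Option.elim o χ fun c => ψ + c • χ) (G i) = 0).card := by
    by_contra hno
    push_neg at hno
    have hsle : (∑ o : Option F,
        (I₀.filter fun i => (Option.elim o χ fun c => ψ + c • χ) (G i) = 0).card)
        ≤ (Fintype.card F + 1) * (K + α) := by
      calc (∑ o : Option F,
          (I₀.filter fun i => (Option.elim o χ fun c => ψ + c • χ) (G i) = 0).card)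
          ≤ ∑ _o : Option F, (K + α) :=
            Finset.sum_le_sum fun o _ => by have := hno o; omega
        _ = (Fintype.card F + 1) * (K + α) := by
            simp [Finset.sum_const, Finset.card_univ, Fintype.card_option]
    have hge : I₀.card + Fintype.card F * K ≤ I₀.card + Fintype.card F *
        (I₀.filter fun i => ψ (G i) = 0 ∧ χ (G i) = 0).card :=
      Nat.add_le_add_left (Nat.mul_le_mul_left _ hm0) _
    rw [← hsum1] at hge
    have e1 : (Fintype.card F + 1) * (K + α) =
        Fintype.card F * K + Fintype.card F * α + K + α := by ring
    have e2 : α * (Fintype.card F + 1) = Fintype.card F * α + α := by ring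
    rw [hI₀card] at hge
    linarith
  obtain ⟨o₀, ho₀⟩ := hex
  obtain ⟨ψ', hψ'def⟩ : ∃ x : (Fin (K + 3) → F) →ₗ[F] F,
      x = Option.elim o₀ χ fun c => ψ + c • χ := ⟨_, rfl⟩
  rw [← hψ'def] at ho₀
  -- all members of the second pencil are nonzero
  have hne2 : ∀ o : Option F, (Option.elim o ψ' fun c => φ₀ + c • ψ') ≠ 0 := by
    intro o heq
    rcases o₀ with _ | c₀ <;> simp only [Option.elim] at hψ'def <;> subst hψ'def <;>
      rcases o with _ | c <;> simp only [Option.elim] at heq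
    · have := hind 0 0 1 (by rw [zero_smul, zero_smul, one_smul, zero_add, zero_add]; exact heq)
      exact one_ne_zero this.2.2
    · have := hind 1 0 c (by rw [one_smul, zero_smul, add_zero]; exact heq)
      exact one_ne_zero this.1
    · have := hind 0 1 c₀ (by rw [zero_smul, one_smul, zero_add]; exact heq)
      exact one_ne_zero this.2.1
    · have := hind 1 c (c * c₀) (by
        rw [one_smul, mul_smul]
        rw [smul_add] at heq
        rw [add_assoc]
        exact heq)
      exact one_ne_zero this.1
  have hsum2 := pencil_sum G φ₀ ψ' Finset.univ
  have hm1 : K + 1 + α ≤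
      (Finset.univ.filter fun i => φ₀ (G i) = 0 ∧ ψ' (G i) = 0).card := by
    rw [hI₀, Finset.filter_filter] at ho₀
    exact ho₀
  have hsumle : (∑ o : Option F,
      (Finset.univ.filter fun i => (Option.elim o ψ' fun c => φ₀ + c • ψ') (G i) = 0).card)
      ≤ (Fintype.card F + 1) * (K + s + 2) := by
    calc (∑ o : Option F,
        (Finset.univ.filter fun i => (Option.elim o ψ' fun c => φ₀ + c • ψ') (G i) = 0).card)
        ≤ ∑ _o : Option F, (K + s + 2) := by
          refine Finset.sum_le_sum fun o _ => ?_
          have hb := hbound _ (hne2 o)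
          have hrfl : hypCount G (Option.elim o ψ' fun c => φ₀ + c • ψ') =
            (Finset.univ.filter fun i =>
              (Option.elim o ψ' fun c => φ₀ + c • ψ') (G i) = 0).card := rfl
          rw [hrfl] at hb
          omega
      _ = (Fintype.card F + 1) * (K + s + 2) := by
          simp [Finset.sum_const, Finset.card_univ, Fintype.card_option]
  have hcardn : (Finset.univ : Finset (Fin n)).card = n := by simp
  rw [hsum2, hcardn] at hsumle
  have hkey : n + Fintype.card F * (K + 1 + α) ≤ (Fintype.card F + 1) * (K + s + 2) :=
    le_trans (Nat.add_le_add_left (Nat.mul_le_mul_left _ hm1) n) hsumle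
  obtain ⟨β, hβ⟩ : ∃ β, s + 1 = α + β := ⟨s + 1 - α, by omega⟩
  have hβ' : s + 1 - α = β := by omega
  rw [hβ']
  have hexp : (Fintype.card F + 1) * (K + s + 2) =
      Fintype.card F * (K + 1 + α) + (K + 1 + α) + β * (Fintype.card F + 1) := by
    have h4 : K + s + 2 = (K + 1 + α) + β := by omega
    rw [h4]; ring
  rw [hexp] at hkey
  linarith

end aux

/-- If `k ≥ 3` and `s ≥ α(q+1) - 1` for an integer `α ≥ 0`, then
`m^s(k,q) ≤ (s+1-α)(q+1) + k - 2 + α`. In particular, if `s ≥ q` then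
`m^s(k,q) ≤ s(q+1) + k - 1`. -/
theorem mPar_big_defect_bound (F : Type*) [Field F] [Fintype F] [DecidableEq F]
    (k s : ℕ) (hk : 3 ≤ k) :
    (∀ α : ℕ, α * (Fintype.card F + 1) ≤ s + 1 →
      mPar F s k + 2 ≤ (s + 1 - α) * (Fintype.card F + 1) + k + α) ∧
    (Fintype.card F ≤ s → mPar F s k + 1 ≤ s * (Fintype.card F + 1) + k) := by
  obtain ⟨K, rfl⟩ : ∃ K, k = K + 3 := ⟨k - 3, by omega⟩
  have part1 : ∀ α : ℕ, α * (Fintype.card F + 1) ≤ s + 1 →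
      mPar F s (K + 3) + 2 ≤ (s + 1 - α) * (Fintype.card F + 1) + (K + 3) + α := by
    intro α hα
    obtain ⟨P, hP⟩ : ∃ P, (s + 1 - α) * (Fintype.card F + 1) = P := ⟨_, rfl⟩
    rw [hP]
    have hub : mPar F s (K + 3) ≤ P + (K + 3) + α - 2 := by
      apply csSup_le'
      rintro x ⟨d, G, hC, hsing⟩
      have h := main_bound hα G hC hsing
      rw [hP] at h
      omega
    omega
  refine ⟨part1, fun hqs => ?_⟩
  have h1 := part1 1 (by rw [one_mul]; omega)
  obtain ⟨P, hP⟩ : ∃ P, s * (Fintype.card F + 1) = P := ⟨_, rfl⟩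
  have hs1 : s + 1 - 1 = s := by omega
  rw [hs1, hP] at h1
  rw [hP]
  omega
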